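/- For every integer c ≥ 1 there exists N such that for all n ≥ N the following holds: for every choice of positions 0 ≤ p_1 < p_2 < ... < p_c < n and bits v_1,...,v_c ∈ {0,1}, there exist words x, x' ∈ {0,1}^n, both satisfying x(p_i) = v_i and x'(p_i) = v_i for all i, such that A_N(x) > n/3 and A_N(x') ≤ n/3. (This is the combinatorial content of the theorem that L_{2,3} = {x ∈ {0,1}* : A_N(x) > |x|/3} is SAC⁰-immune and SAC⁰-coimmune: no depth-0 semi-unbounded fan-in circuit condition on boundedly many bits can force membership in, or exclusion from, L_{2,3}.) -/

import Mathlib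

/-- A nondeterministic finite automaton with state set `Fin m` over alphabet `σ`. -/
structure NFAc (σ : Type) (m : ℕ) where
  start : Fin m
  accept : Fin m → Prop
  step : Fin m → σ → Fin m → Prop

/-- `M.RunFrom p y l` : `l` is the sequence of states of an accepting run of `M`
on the word `y`, starting at state `p` (so `l` lists the `y.length + 1` visited
states, the last one being an accepting state). -/
def NFAc.RunFrom {σ : Type} {m : ℕ} (M : NFAc σ m) : Fin m → List σ → List (Fin m) → Prop
  | p, [], l => l = [p] ∧ M.accept p
  | p, a :: y, l => ∃ q l', M.step p a q ∧ NFAc.RunFrom M q y l' ∧ l = p :: l'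

/-- `M` accepts `x`, and there is exactly one accepting path of `M` of length `x.length`
(counting both the word read and the sequence of states traversed). -/
def NFAc.UniquelyAccepts {σ : Type} {m : ℕ} (M : NFAc σ m) (x : List σ) : Prop :=
  (∃ l, M.RunFrom M.start x l) ∧
  ∀ y l y' l', y.length = x.length → y'.length = x.length →
    M.RunFrom M.start y l → M.RunFrom M.start y' l' → y = y' ∧ l = l'

/-- The nondeterministic automatic complexity of a word `x`: the least number of states
of an NFA accepting `x` uniquely among words of its length, along a unique path. -/
noncomputable def AN {σ : Type} (x : List σ) : ℕ :=
  sInf {m | ∃ M : NFAc σ m, M.UniquelyAccepts x}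


/-! ### Auxiliary machinery -/

namespace SAC0Aux

lemma runFrom_ofFn {σ : Type} {m : ℕ} (M : NFAc σ m) (n : ℕ) (w : ℕ → Fin m) (ξ : ℕ → σ)
    (hstep : ∀ j < n, M.step (w j) (ξ j) (w (j+1))) (hacc : M.accept (w n)) :
    M.RunFrom (w 0) (List.ofFn (fun j : Fin n => ξ j)) (List.ofFn (fun j : Fin (n+1) => w j)) := by
  induction n generalizing w ξ with
  | zero => simp [NFAc.RunFrom, List.ofFn_succ]; exact hacc
  | succ n ih =>
    rw [List.ofFn_succ, List.ofFn_succ (f := fun j : Fin (n+2) => w j)]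
    exact ⟨w 1, _, hstep 0 (Nat.succ_pos n),
      ih (fun j => w (j+1)) (fun j => ξ (j+1)) (fun j hj => hstep (j+1) (by omega)) hacc, rfl⟩

lemma runFrom_facts {σ : Type} {m : ℕ} (M : NFAc σ m) (p : Fin m) (y : List σ) (l : List (Fin m))
    (h : M.RunFrom p y l) (d : Fin m) (d2 : σ) :
    l.length = y.length + 1 ∧ l.getD 0 d = p ∧ M.accept (l.getD y.length d) ∧
      ∀ j < y.length, M.step (l.getD j d) (y.getD j d2) (l.getD (j+1) d) := by
  induction y generalizing p l with
  | nil => obtain ⟨rfl, ha⟩ := h; simp [ha]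
  | cons a y ih =>
    obtain ⟨q, l', hs, hr, rfl⟩ := h
    obtain ⟨h1, h2, h3, h4⟩ := ih q l' hr
    refine ⟨by simp [h1], rfl, by simpa using h3, ?_⟩
    intro j hj
    match j with
    | 0 => show M.step p a (l'.getD 0 d); rw [h2]; exact hs
    | (j+1) => simpa using h4 j (by simpa using hj)

/-- Surgery: re-routing the unique run along an index map `F` shows letters agree. -/
lemma surgery {m : ℕ} (M : NFAc (Fin 2) m) (x : List (Fin 2)) (l : List (Fin m))
    (hu : M.UniquelyAccepts x) (hl : M.RunFrom M.start x l) (F : ℕ → ℕ)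
    (hF0 : l.getD (F 0) M.start = l.getD 0 M.start)
    (hFn : F x.length = x.length)
    (hFlt : ∀ j < x.length, F j < x.length)
    (hFstep : ∀ j < x.length, l.getD (F (j+1)) M.start = l.getD (F j + 1) M.start) :
    ∀ j < x.length, x.getD j 0 = x.getD (F j) 0 := by
  obtain ⟨hlen, hhead, hacc, hsteps⟩ := runFrom_facts M M.start x l hl M.start 0
  have hst : l.getD (F 0) M.start = M.start := hF0.trans hhead
  have hrun' : M.RunFrom (l.getD (F 0) M.start)
      (List.ofFn (fun j : Fin x.length => x.getD (F j) 0))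
      (List.ofFn (fun j : Fin (x.length+1) => l.getD (F j) M.start)) := by
    refine runFrom_ofFn M x.length (fun j => l.getD (F j) M.start) (fun j => x.getD (F j) 0)
      (fun j hj => ?_) ?_
    · have h1 := hsteps (F j) (hFlt j hj)
      have h2 : l.getD (F (j+1)) M.start = l.getD (F j + 1) M.start := hFstep j hj
      show M.step (l.getD (F j) M.start) (x.getD (F j) 0) (l.getD (F (j+1)) M.start)
      rw [h2]; exact h1
    · show M.accept (l.getD (F x.length) M.start)
      rw [hFn]; exact hacc
  rw [hst] at hrun'
  have heq := hu.2 x l (List.ofFn (fun j : Fin x.length => x.getD (F j) 0))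
      (List.ofFn (fun j : Fin (x.length+1) => l.getD (F j) M.start)) rfl (by simp) hl hrun'
  intro j hj
  have hxj : (List.ofFn (fun j : Fin x.length => x.getD (F j) 0)).getD j 0 = x.getD (F j) 0 := by
    rw [List.getD_eq_getElem _ _ (by simpa using hj)]
    simp
  rw [← heq.1] at hxj
  exact hxj

/-- `x` has no long agreement runs: in every window of length `K`, every shift `a`
has a disagreement. -/
def Mixing (ξ : ℕ → Fin 2) (n K : ℕ) : Prop :=
  ∀ t a, 1 ≤ a → t + K + a ≤ n → ∃ j, t ≤ j ∧ j < t + K ∧ ξ j ≠ ξ (j + a)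


lemma same_gap {m : ℕ} (M : NFAc (Fin 2) m) (x : List (Fin 2)) (l : List (Fin m)) (K : ℕ) (hK : 1 ≤ K)
    (hu : M.UniquelyAccepts x) (hl : M.RunFrom M.start x l)
    (hmix : Mixing (fun j => x.getD j 0) x.length K)
    {t1 t2 s1 s2 : ℕ} (h12 : t1 < t2) (hss : s1 < s2) (hts : t1 ≤ s1)
    (hgap : t2 - t1 = s2 - s1) (hs2 : s2 ≤ x.length)
    (hw1 : l.getD t1 M.start = l.getD t2 M.start)
    (hw2 : l.getD s1 M.start = l.getD s2 M.start) :
    s1 < t1 + K := by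
  by_contra hcon
  push_neg at hcon
  set n := x.length with hn
  set a := t2 - t1 with ha
  have ha1 : 1 ≤ a := by omega
  have ht2 : t2 = t1 + a := by omega
  have hs2' : s2 = s1 + a := by omega
  set F : ℕ → ℕ := fun j => if j < t1 then j else if j < s1 then j + a else j with hF
  have hag := surgery M x l hu hl F ?_ ?_ ?_ ?_
  · obtain ⟨j, hj1, hj2, hj3⟩ := hmix t1 a ha1 (by omega)
    have hjn : j < n := by omega
    have hFj : F j = j + a := by simp only [hF]; rw [if_neg (by omega), if_pos (by omega)]
    have := hag j hjn
    rw [hFj] at this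
    exact hj3 this
  · -- hF0
    by_cases h0 : 0 < t1
    · simp only [hF]; rw [if_pos h0]
    · have he : F 0 = t2 := by
        simp only [hF]; rw [if_neg (by omega), if_pos (by omega)]; omega
      rw [he, show (0:ℕ) = t1 by omega]
      exact hw1.symm
  · simp only [hF]; rw [if_neg (by omega), if_neg (by omega)]
  · intro j hj
    simp only [hF]
    split_ifs <;> omega
  · -- hFstep
    intro j hj
    rcases lt_trichotomy (j+1) t1 with h | h | h
    · have e1 : F (j+1) = j + 1 := by simp only [hF]; rw [if_pos h]
      have e2 : F j = j := by simp only [hF]; rw [if_pos (by omega)]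
      rw [e1, e2]
    · have e1 : F (j+1) = t1 + a := by
        simp only [hF]; rw [if_neg (by omega), if_pos (by omega), h]
      have e2 : F j = j := by simp only [hF]; rw [if_pos (by omega)]
      rw [e1, e2, h, ← ht2]
      exact hw1.symm
    · rcases lt_trichotomy (j+1) s1 with h' | h' | h'
      · have e1 : F (j+1) = j + 1 + a := by simp only [hF]; rw [if_neg (by omega), if_pos h']
        have e2 : F j = j + a := by simp only [hF]; rw [if_neg (by omega), if_pos (by omega)]
        rw [e1, e2]; congr 1; omega
      · have e1 : F (j+1) = s1 := by simp only [hF]; rw [if_neg (by omega), if_neg (by omega), h']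
        have e2 : F j = j + a := by simp only [hF]; rw [if_neg (by omega), if_pos (by omega)]
        rw [e1, e2, show j + a + 1 = s2 by omega]
        exact hw2
      · have e1 : F (j+1) = j + 1 := by simp only [hF]; rw [if_neg (by omega), if_neg (by omega)]
        have e2 : F j = j := by simp only [hF]; rw [if_neg (by omega), if_neg (by omega)]
        rw [e1, e2]

lemma adj_gap {m : ℕ} (M : NFAc (Fin 2) m) (x : List (Fin 2)) (l : List (Fin m)) (K : ℕ) (hK : 1 ≤ K)
    (hu : M.UniquelyAccepts x) (hl : M.RunFrom M.start x l)
    (hmix : Mixing (fun j => x.getD j 0) x.length K)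
    {t1 t2 t3 : ℕ} (h12 : t1 < t2) (h23 : t2 < t3) (h3n : t3 ≤ x.length)
    (hw12 : l.getD t1 M.start = l.getD t2 M.start)
    (hw13 : l.getD t1 M.start = l.getD t3 M.start) :
    t3 < t2 + K := by
  by_contra hcon
  push_neg at hcon
  set n := x.length with hn
  set a := t2 - t1 with ha
  set b := t3 - t2 with hb
  have ha1 : 1 ≤ a := by omega
  have hb1 : 1 ≤ b := by omega
  have ht2 : t2 = t1 + a := by omega
  have ht3 : t3 = t1 + a + b := by omega
  set F : ℕ → ℕ := fun j =>
    if j < t1 then j else if j < t1 + b then j + a else if j < t3 then j - b else j with hF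
  have hag := surgery M x l hu hl F ?_ ?_ ?_ ?_
  · obtain ⟨j, hj1, hj2, hj3⟩ := hmix t1 a ha1 (by omega)
    have hjn : j < n := by omega
    have hFj : F j = j + a := by
      simp only [hF]; rw [if_neg (by omega), if_pos (by omega)]
    have := hag j hjn
    rw [hFj] at this
    exact hj3 this
  · by_cases h0 : 0 < t1
    · simp only [hF]; rw [if_pos h0]
    · have he : F 0 = t2 := by
        simp only [hF]; rw [if_neg (by omega), if_pos (by omega)]; omega
      rw [he, show (0:ℕ) = t1 by omega]
      exact hw12.symm
  · simp only [hF]; rw [if_neg (by omega), if_neg (by omega), if_neg (by omega)]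
  · intro j hj
    simp only [hF]
    split_ifs <;> omega
  · intro j hj
    rcases lt_trichotomy (j+1) t1 with h | h | h
    · have e1 : F (j+1) = j + 1 := by simp only [hF]; rw [if_pos h]
      have e2 : F j = j := by simp only [hF]; rw [if_pos (by omega)]
      rw [e1, e2]
    · have e1 : F (j+1) = t1 + a := by
        simp only [hF]; rw [if_neg (by omega), if_pos (by omega), h]
      have e2 : F j = j := by simp only [hF]; rw [if_pos (by omega)]
      rw [e1, e2, h, ← ht2]
      exact hw12.symm
    · rcases lt_trichotomy (j+1) (t1 + b) with h' | h' | h'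
      · have e1 : F (j+1) = j + 1 + a := by
          simp only [hF]; rw [if_neg (by omega), if_pos h']
        have e2 : F j = j + a := by simp only [hF]; rw [if_neg (by omega), if_pos (by omega)]
        rw [e1, e2]; congr 1; omega
      · have e1 : F (j+1) = t1 := by
          simp only [hF]
          rw [if_neg (by omega), if_neg (by omega), if_pos (by omega), h']
          omega
        have e2 : F j = j + a := by simp only [hF]; rw [if_neg (by omega), if_pos (by omega)]
        rw [e1, e2, show j + a + 1 = t3 by omega]
        exact hw13
      · rcases lt_trichotomy (j+1) t3 with h'' | h'' | h''
        · have e1 : F (j+1) = j + 1 - b := by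
            simp only [hF]; rw [if_neg (by omega), if_neg (by omega), if_pos h'']
          have e2 : F j = j - b := by
            simp only [hF]; rw [if_neg (by omega), if_neg (by omega), if_pos (by omega)]
          rw [e1, e2, show j - b + 1 = j + 1 - b by omega]
        · have e1 : F (j+1) = t3 := by
            simp only [hF]
            rw [if_neg (by omega), if_neg (by omega), if_neg (by omega), h'']
          have e2 : F j = j - b := by
            simp only [hF]; rw [if_neg (by omega), if_neg (by omega), if_pos (by omega)]
          rw [e1, e2, show j - b + 1 = t2 by omega]
          exact hw13.symm.trans hw12
        · have e1 : F (j+1) = j + 1 := by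
            simp only [hF]
            rw [if_neg (by omega), if_neg (by omega), if_neg (by omega)]
          have e2 : F j = j := by
            simp only [hF]; rw [if_neg (by omega), if_neg (by omega), if_neg (by omega)]
          rw [e1, e2]


section LowerCounting
attribute [local instance] Classical.propDecidable

/-- state at time `j` in run `l`. -/
def wf {m : ℕ} (l : List (Fin m)) (d : Fin m) (j : ℕ) : Fin m := l.getD j d

/-- previous occurrence of the state `wf l d t` before time `t`. -/
def prevOcc {m : ℕ} (l : List (Fin m)) (d : Fin m) (t : ℕ) : ℕ :=
  Nat.findGreatest (fun s => wf l d s = wf l d t) (t-1)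

theorem lower_main {m : ℕ} (M : NFAc (Fin 2) m) (x : List (Fin 2)) (K : ℕ) (hK : 1 ≤ K)
    (hu : M.UniquelyAccepts x) (hmix : Mixing (fun j => x.getD j 0) x.length K) :
    x.length + 1 ≤ 2 * m + K * K := by
  obtain ⟨l, hl⟩ := hu.1
  set n := x.length with hn
  set d := M.start with hd
  have hprev : ∀ t : ℕ, (∃ s, s < t ∧ wf l d s = wf l d t) →
      wf l d (prevOcc l d t) = wf l d t ∧ prevOcc l d t < t ∧
        ∀ s, s < t → wf l d s = wf l d t → s ≤ prevOcc l d t := by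
    intro t ⟨s, hs1, hs2⟩
    refine ⟨?_, ?_, ?_⟩
    · unfold prevOcc
      exact Nat.findGreatest_spec (P := fun s => wf l d s = wf l d t) (n := t-1) (m := s) (by omega) hs2
    · have h1 : prevOcc l d t ≤ t - 1 := by
        unfold prevOcc
        exact Nat.findGreatest_le (t-1)
      omega
    · intro s' hs1' hs2'
      unfold prevOcc
      exact Nat.le_findGreatest (P := fun s => wf l d s = wf l d t) (n := t-1) (by omega) hs2'
  set R : Finset ℕ := (Finset.range (n+1)).filter
    (fun t => ∃ s, s < t ∧ wf l d s = wf l d t) with hR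
  set NR : Finset ℕ := (Finset.range (n+1)).filter
    (fun t => ¬∃ s, s < t ∧ wf l d s = wf l d t) with hNR
  have hRNR : R.card + NR.card = n + 1 := by
    rw [hR, hNR, Finset.card_filter_add_card_filter_not]
    exact Finset.card_range (n+1)
  have hNRm : NR.card ≤ m := by
    have h0 : ∀ t ∈ NR, wf l d t ∈ (Finset.univ : Finset (Fin m)) := fun t _ => Finset.mem_univ _
    refine le_trans (Finset.card_le_card_of_injOn (wf l d) h0 ?_) (by simp)
    intro t ht t' ht' hww
    simp only [hNR, Finset.coe_filter, Finset.mem_range, Set.mem_setOf_eq] at ht ht'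
    by_contra hne
    rcases lt_or_gt_of_ne hne with h | h
    · exact ht'.2 ⟨t, h, hww⟩
    · exact ht.2 ⟨t', h, hww.symm⟩
  set T3 : Finset ℕ := R.filter (fun t => ∃ s, s < prevOcc l d t ∧ wf l d s = wf l d t) with hT3
  have hmemR : ∀ t, t ∈ R ↔ (t < n + 1 ∧ ∃ s, s < t ∧ wf l d s = wf l d t) := by
    intro t; rw [hR]; simp only [Finset.mem_filter, Finset.mem_range]
  have hmemT3 : ∀ t, t ∈ T3 ↔ (t ∈ R ∧ ∃ s, s < prevOcc l d t ∧ wf l d s = wf l d t) := by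
    intro t; rw [hT3]; simp only [Finset.mem_filter]
  have hRT3 : (R \ T3).card ≤ m := by
    have h0 : ∀ t ∈ R \ T3, wf l d t ∈ (Finset.univ : Finset (Fin m)) :=
      fun t _ => Finset.mem_univ _
    refine le_trans (Finset.card_le_card_of_injOn (wf l d) h0 ?_) (by simp)
    have key : ∀ u u' : ℕ, u < u' → u ∈ R \ T3 → u' ∈ R \ T3 → wf l d u = wf l d u' → False := by
      intro u u' huu hu hu' hww'
      rw [Finset.mem_sdiff] at hu hu'
      have hu'R := (hmemR u').1 hu'.1
      obtain ⟨hp1, hp2, hp3⟩ := hprev u' hu'R.2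
      have hup : u ≤ prevOcc l d u' := hp3 u huu hww'
      rcases eq_or_lt_of_le hup with he | hlt
      · have huR := (hmemR u).1 hu.1
        obtain ⟨s, hs1, hs2⟩ := huR.2
        exact hu'.2 ((hmemT3 u').2 ⟨hu'.1, s, by omega, by rw [hs2, hww']⟩)
      · exact hu'.2 ((hmemT3 u').2 ⟨hu'.1, u, hlt, hww'⟩)
    intro t ht t' ht' hww
    by_contra hne
    rcases lt_or_gt_of_ne hne with h | h
    · exact key t t' h ht ht' hww
    · exact key t' t h ht' ht hww.symm
  have hT3facts : ∀ t ∈ T3, prevOcc l d t < t ∧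
      wf l d (prevOcc l d t) = wf l d t ∧
      prevOcc l d (prevOcc l d t) < prevOcc l d t ∧
      wf l d (prevOcc l d (prevOcc l d t)) = wf l d t ∧ t ≤ n := by
    intro t ht
    obtain ⟨htR, s, hs1, hs2⟩ := (hmemT3 t).1 ht
    have htR' := (hmemR t).1 htR
    obtain ⟨hp1, hp2, hp3⟩ := hprev t htR'.2
    obtain ⟨hq1, hq2, hq3⟩ := hprev (prevOcc l d t) ⟨s, hs1, by rw [hs2, hp1.symm]⟩
    exact ⟨hp2, hp1, hq2, by rw [hq1, hp1], by omega⟩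
  have hgapK : ∀ t ∈ T3, 1 ≤ t - prevOcc l d t ∧ t - prevOcc l d t ≤ K - 1 := by
    intro t ht
    obtain ⟨h1, h2, h3, h4, h5⟩ := hT3facts t ht
    have h2' : l.getD (prevOcc l d t) d = l.getD t d := h2
    have h4' : l.getD (prevOcc l d (prevOcc l d t)) d = l.getD t d := h4
    have := adj_gap M x l K hK hu hl hmix
      (t1 := prevOcc l d (prevOcc l d t)) (t2 := prevOcc l d t) (t3 := t)
      h3 h1 h5 (by rw [h4', h2']) h4'
    omega
  have hsame : ∀ t ∈ T3, ∀ t' ∈ T3, t ≤ t' →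
      t - prevOcc l d t = t' - prevOcc l d t' → t' < t + K := by
    intro t ht t' ht' htt hgg
    obtain ⟨h1, h2, _, _, h5⟩ := hT3facts t ht
    obtain ⟨h1', h2', _, _, h5'⟩ := hT3facts t' ht'
    have h2a : l.getD (prevOcc l d t) d = l.getD t d := h2
    have h2b : l.getD (prevOcc l d t') d = l.getD t' d := h2'
    have := same_gap M x l K hK hu hl hmix
      (t1 := prevOcc l d t) (t2 := t) (s1 := prevOcc l d t') (s2 := t')
      h1 h1' (by omega) (by omega) h5' h2a h2b
    omega
  have hT3card : T3.card ≤ (K-1) * K := by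
    have hsub : T3 ⊆ (Finset.Icc 1 (K-1)).biUnion
        (fun b => T3.filter (fun t => t - prevOcc l d t = b)) := by
      intro t ht
      rw [Finset.mem_biUnion]
      obtain ⟨hg1, hg2⟩ := hgapK t ht
      exact ⟨t - prevOcc l d t, Finset.mem_Icc.2 ⟨hg1, hg2⟩, Finset.mem_filter.2 ⟨ht, rfl⟩⟩
    refine le_trans (Finset.card_le_card hsub) (le_trans (Finset.card_biUnion_le) ?_)
    have hb : ∀ b ∈ Finset.Icc 1 (K-1),
        (T3.filter (fun t => t - prevOcc l d t = b)).card ≤ K := by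
      intro b _
      set Tb := T3.filter (fun t => t - prevOcc l d t = b) with hTb
      rcases Finset.eq_empty_or_nonempty Tb with he | hne
      · rw [he]; simp
      · set t0 := Tb.min' hne with ht0
        have ht0m : t0 ∈ Tb := Finset.min'_mem _ _
        have hsub2 : Tb ⊆ Finset.Icc t0 (t0 + (K-1)) := by
          intro t ht
          rw [Finset.mem_Icc]
          have hmin := Finset.min'_le Tb t ht
          rw [← ht0] at hmin
          rw [hTb, Finset.mem_filter] at ht ht0m
          have := hsame t0 ht0m.1 t ht.1 hmin (by rw [ht0m.2, ht.2])
          omega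
        refine le_trans (Finset.card_le_card hsub2) ?_
        rw [Nat.card_Icc]
        omega
    refine le_trans (Finset.sum_le_sum hb) ?_
    rw [Finset.sum_const, Nat.card_Icc, smul_eq_mul]
    have : K - 1 + 1 - 1 = K - 1 := by omega
    rw [this]
  have hRcard : R.card ≤ (R \ T3).card + T3.card := by
    have hsub : T3 ⊆ R := Finset.filter_subset _ _
    have h2 := Finset.card_sdiff_add_card_eq_card hsub
    omega
  have hmul : (K-1) * K ≤ K * K := Nat.mul_le_mul_right K (by omega)
  omega

end LowerCounting

section MixingWords
attribute [local instance] Classical.propDecidable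

noncomputable def extf {n : ℕ} (f : Fin n → Fin 2) : ℕ → Fin 2 :=
  fun j => if h : j < n then f ⟨j, h⟩ else 0

theorem exists_mixing (n c K : ℕ) (hK : 1 ≤ K)
    (hcn : (n+1)*(n+1) * 2^(n-K) < 2^(n-c))
    (p : Fin c → ℕ) (hpinj : Function.Injective p) (hpn : ∀ i, p i < n) (v : Fin c → Fin 2) :
    ∃ f : Fin n → Fin 2, (∀ i : Fin c, f ⟨p i, hpn i⟩ = v i) ∧ Mixing (extf f) n K := by
  classical
  set P : Finset (Fin n) := Finset.image (fun i => (⟨p i, hpn i⟩ : Fin n)) Finset.univ with hP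
  have hPcard : P.card = c := by
    rw [hP, Finset.card_image_of_injective]
    · simp
    · intro i j hij
      exact hpinj (by simpa using congrArg Fin.val hij)
  have hmemP : ∀ j : Fin n, j ∈ P ↔ ∃ i, (p i : ℕ) = (j : ℕ) := by
    intro j
    rw [hP]
    simp only [Finset.mem_image, Finset.mem_univ, true_and]
    constructor
    · rintro ⟨i, hi⟩; exact ⟨i, by simpa using congrArg Fin.val hi⟩
    · rintro ⟨i, hi⟩; exact ⟨i, by ext; simpa using hi⟩
  set u : Fin n → Fin 2 := fun j =>
    if h : ∃ i, (p i : ℕ) = (j : ℕ) then v h.choose else 0 with hu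
  have huval : ∀ i : Fin c, u ⟨p i, hpn i⟩ = v i := by
    intro i
    have hex : ∃ i', (p i' : ℕ) = ((⟨p i, hpn i⟩ : Fin n) : ℕ) := ⟨i, rfl⟩
    rw [hu]
    simp only [dif_pos hex]
    congr 1
    exact hpinj hex.choose_spec
  set S : Finset (Fin n → Fin 2) :=
    Finset.univ.filter (fun f => ∀ i : Fin c, f ⟨p i, hpn i⟩ = v i) with hS
  -- lower bound on S.card
  have hScard : 2^(n-c) ≤ S.card := by
    have e1 : Fintype.card {j : Fin n // j ∉ P} = n - c := by
      rw [Fintype.card_subtype_compl]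
      simp [hPcard]
    have e2 : Fintype.card ({j : Fin n // j ∉ P} → Fin 2) = 2^(n-c) := by
      rw [Fintype.card_fun, e1]; simp
    rw [← e2, ← Fintype.card_coe S]
    set Φ : ({j : Fin n // j ∉ P} → Fin 2) → {f // f ∈ S} := fun g =>
      ⟨fun j => if h : j ∈ P then u j else g ⟨j, h⟩, by
        rw [hS, Finset.mem_filter]
        refine ⟨Finset.mem_univ _, fun i => ?_⟩
        have hmem : (⟨p i, hpn i⟩ : Fin n) ∈ P := (hmemP _).2 ⟨i, rfl⟩
        simp only [dif_pos hmem]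
        exact huval i⟩ with hΦ
    refine Fintype.card_le_of_injective Φ ?_
    intro g g' hgg
    funext j
    have := congrArg (fun F => F.1 j.1) hgg
    simp only [hΦ, dif_neg j.2] at this
    convert this <;> simp
  -- Bad sets
  set Bad : ℕ → ℕ → Finset (Fin n → Fin 2) := fun t a =>
    Finset.univ.filter (fun f => ∀ j, t ≤ j → j < t + K → extf f j = extf f (j + a)) with hBad
  have hBadcard : ∀ t a, 1 ≤ a → t + K + a ≤ n → (Bad t a).card ≤ 2^(n-K) := by
    intro t a ha hta
    -- zeroing injection
    set ψ : (Fin n → Fin 2) → (Fin n → Fin 2) := fun f j =>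
      if t + a ≤ (j : ℕ) ∧ (j : ℕ) < t + a + K then 0 else f j with hψ
    set Z : Finset (Fin n → Fin 2) :=
      Finset.univ.filter (fun h => ∀ j : Fin n, t + a ≤ (j:ℕ) → (j:ℕ) < t + a + K → h j = 0)
      with hZ
    have hmap : ∀ f ∈ Bad t a, ψ f ∈ Z := by
      intro f _
      rw [hZ, Finset.mem_filter]
      exact ⟨Finset.mem_univ _, fun j h1 h2 => by simp only [hψ]; simp [h1, h2]⟩
    have hinj : Set.InjOn ψ (Bad t a) := by
      intro f hf g hg hfg
      simp only [hBad, Finset.coe_filter, Finset.mem_univ, true_and, Set.mem_setOf_eq] at hf hg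
      funext j
      -- strong induction on j.val
      suffices h : ∀ jv : ℕ, ∀ hjv : jv < n, f ⟨jv, hjv⟩ = g ⟨jv, hjv⟩ by exact h j.1 j.2
      intro jv
      induction jv using Nat.strong_induction_on with
      | _ jv ih =>
        intro hjv
        by_cases hblock : t + a ≤ jv ∧ jv < t + a + K
        · -- use Bad property to reduce to jv - a
          have hj' : t ≤ jv - a ∧ jv - a < t + K := by omega
          have hred : ∀ F : Fin n → Fin 2, (∀ j, t ≤ j → j < t + K → extf F j = extf F (j+a)) →
              F ⟨jv, hjv⟩ = F ⟨jv - a, by omega⟩ := by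
            intro F hF
            have h0 := hF (jv - a) hj'.1 hj'.2
            unfold extf at h0
            rw [dif_pos (show jv - a < n by omega), dif_pos (show jv - a + a < n by omega)] at h0
            calc F ⟨jv, hjv⟩ = F ⟨jv - a + a, by omega⟩ := by congr 1; ext; simp; omega
              _ = F ⟨jv - a, by omega⟩ := h0.symm
          rw [hred f hf, hred g hg]
          exact ih (jv - a) (by omega) (by omega)
        · have := congrArg (fun F => F ⟨jv, hjv⟩) hfg
          simpa only [hψ, if_neg hblock] using this
    -- bound card Z
    have hZcard : Z.card ≤ 2^(n-K) := by
      have e1 : Fintype.card {j : Fin n // ¬(t + a ≤ (j:ℕ) ∧ (j:ℕ) < t + a + K)} ≤ n - K := by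
        rw [Fintype.card_subtype_compl]
        have : K ≤ Fintype.card {j : Fin n // t + a ≤ (j:ℕ) ∧ (j:ℕ) < t + a + K} := by
          have := Fintype.card_le_of_injective
            (fun i : Fin K => (⟨⟨t + a + i, by omega⟩, by constructor <;> simp <;> omega⟩ :
              {j : Fin n // t + a ≤ (j:ℕ) ∧ (j:ℕ) < t + a + K}))
            (by intro i i' hii
                have := congrArg (fun z => (z.1 : ℕ)) hii
                simp at this
                ext; omega)
          simpa using this
        simp only [Fintype.card_fin]
        omega
      calc Z.card ≤ Fintype.card ({j : Fin n // ¬(t + a ≤ (j:ℕ) ∧ (j:ℕ) < t + a + K)} → Fin 2) := by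
            rw [← Fintype.card_coe Z]
            refine Fintype.card_le_of_injective
              (fun F => fun j => F.1 j.1) ?_
            intro F F' hFF
            ext j
            by_cases hb : t + a ≤ (j:ℕ) ∧ (j:ℕ) < t + a + K
            · have h1 := (Finset.mem_filter.1 F.2).2 j hb.1 hb.2
              have h2 := (Finset.mem_filter.1 F'.2).2 j hb.1 hb.2
              rw [h1, h2]
            · have h3 : F.1 j = F'.1 j := congrFun hFF ⟨j, hb⟩
              rw [h3]
        _ ≤ 2^(n-K) := by
            rw [Fintype.card_fun]
            simp only [Fintype.card_fin]
            exact Nat.pow_le_pow_right (by norm_num) e1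
    calc (Bad t a).card ≤ Z.card := Finset.card_le_card_of_injOn ψ hmap hinj
      _ ≤ 2^(n-K) := hZcard
  -- union bound
  set pairs : Finset (ℕ × ℕ) := (Finset.range (n+1)) ×ˢ (Finset.range (n+1)) with hpairs
  set BadAll : Finset (Fin n → Fin 2) := pairs.biUnion
    (fun q => if 1 ≤ q.2 ∧ q.1 + K + q.2 ≤ n then Bad q.1 q.2 else ∅) with hBA
  have hBAcard : BadAll.card < 2^(n-c) := by
    calc BadAll.card ≤ ∑ q ∈ pairs, (if 1 ≤ q.2 ∧ q.1 + K + q.2 ≤ n then Bad q.1 q.2 else ∅).card :=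
          Finset.card_biUnion_le
      _ ≤ ∑ _q ∈ pairs, 2^(n-K) := by
          refine Finset.sum_le_sum ?_
          intro q _
          split_ifs with h
          · exact hBadcard q.1 q.2 h.1 h.2
          · simp
      _ = (n+1)*(n+1) * 2^(n-K) := by
          rw [Finset.sum_const, hpairs]
          simp [mul_assoc]
      _ < 2^(n-c) := hcn
  have hex : ∃ f, f ∈ S \ BadAll := by
    have : 0 < (S \ BadAll).card := by
      have h1 : S.card ≤ (S \ BadAll).card + BadAll.card := by
        calc S.card ≤ ((S \ BadAll) ∪ BadAll).card :=
              Finset.card_le_card (by intro f hf; rw [Finset.mem_union, Finset.mem_sdiff]; tauto)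
          _ ≤ (S \ BadAll).card + BadAll.card := Finset.card_union_le _ _
      omega
    obtain ⟨f, hf⟩ := Finset.card_pos.1 this
    exact ⟨f, hf⟩
  obtain ⟨f, hf⟩ := hex
  rw [Finset.mem_sdiff] at hf
  refine ⟨f, (Finset.mem_filter.1 hf.1).2, ?_⟩
  intro t a ha hta
  by_contra hcon
  push_neg at hcon
  have hfBad : f ∈ Bad t a := by
    rw [hBad, Finset.mem_filter]
    refine ⟨Finset.mem_univ _, fun j h1 h2 => ?_⟩
    by_contra hne
    exact hne (by
      rcases Classical.em (extf f j = extf f (j + a)) with h | h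
      · exact h
      · exact absurd h (by
          have := hcon j h1 h2
          tauto))
  have : f ∈ BadAll := by
    rw [hBA, Finset.mem_biUnion]
    refine ⟨(t, a), ?_, ?_⟩
    · rw [hpairs, Finset.mem_product]
      constructor <;> rw [Finset.mem_range] <;> omega
    · rw [if_pos ⟨ha, hta⟩]; exact hfBad
  exact hf.2 this

end MixingWords

lemma pow_beats (A : ℕ) : ∃ L0, ∀ L, L0 ≤ L → (A+1) * (L+1)^2 ≤ 2^L := by
  set B := A + 1 with hB
  refine ⟨3*B + 10, ?_⟩
  intro L hL
  induction L, hL using Nat.le_induction with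
  | base =>
    have h1 : B ≤ 2^B := le_of_lt (Nat.lt_two_pow_self (n := B))
    have h2 : 3*B + 10 + 1 ≤ 2^(B+4) := by
      have : 3*B + 11 ≤ 14 * 2^B := by
        have := h1; omega
      calc 3*B + 10 + 1 ≤ 14 * 2^B := this
        _ ≤ 16 * 2^B := by omega
        _ = 2^(B+4) := by ring
    calc B * (3*B + 10 + 1)^2 ≤ 2^B * (2^(B+4))^2 :=
          Nat.mul_le_mul h1 (Nat.pow_le_pow_left h2 2)
      _ = 2^(3*B + 8) := by ring
      _ ≤ 2^(3*B + 10) := Nat.pow_le_pow_right (by norm_num) (by omega)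
  | succ L hL ih =>
    have h1 : B * (L+1+1)^2 ≤ 2 * (B * (L+1)^2) := by
      have : (L+2)^2 ≤ 2*(L+1)^2 := by nlinarith
      nlinarith
    calc B * (L+1+1)^2 ≤ 2 * (B * (L+1)^2) := h1
      _ ≤ 2 * 2^L := by omega
      _ = 2^(L+1) := by ring

lemma final_N (c : ℕ) : ∃ N, ∀ n, N ≤ n →
    (1 ≤ c + 2*Nat.log 2 (n+1) + 3 ∧
     3 * (c + 2*Nat.log 2 (n+1) + 3) * (c + 2*Nat.log 2 (n+1) + 3) ≤ n ∧
     (n+1)*(n+1) * 2^(n - (c + 2*Nat.log 2 (n+1) + 3)) < 2^(n-c)) := by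
  obtain ⟨L0, hL0⟩ := pow_beats (3*(c+4)^2)
  refine ⟨2^L0, fun n hn => ?_⟩
  set L := Nat.log 2 (n+1) with hLdef
  have hLL0 : L0 ≤ L := by
    rw [hLdef]
    have : (2:ℕ)^L0 ≤ n + 1 := by omega
    exact (Nat.le_log_iff_pow_le (by norm_num) (by omega)).2 this
  set K := c + 2*L + 3 with hK
  have hbound := hL0 L hLL0
  have h2Ln : 2^L ≤ n + 1 := Nat.pow_log_le_self 2 (by omega)
  have hKL : K ≤ (c+4) * (L+1) := by rw [hK]; nlinarith
  have h3K : 3 * K * K ≤ n := by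
    have h1 : 3 * K * K ≤ 3*(c+4)^2 * (L+1)^2 := by nlinarith
    have h2 : 3*(c+4)^2 * (L+1)^2 + (L+1)^2 ≤ 2^L := by
      have := hbound; nlinarith
    have h3 : 1 ≤ (L+1)^2 := Nat.one_le_pow 2 (L+1) (by omega)
    omega
  refine ⟨by omega, h3K, ?_⟩
  have hKn : K ≤ n := by nlinarith
  have hcK : c ≤ K := by omega
  have hsplit : (2:ℕ)^(n-c) = 2^(n-K) * 2^(K-c) := by
    rw [← pow_add]
    congr 1
    omega
  have hn1 : n + 1 < 2^(L+1) := Nat.lt_pow_succ_log_self (by norm_num) (n+1)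
  have hsq : (n+1)*(n+1) < 2^(K-c) := by
    have h1 : (n+1)*(n+1) < 2^(L+1) * 2^(L+1) := by
      exact Nat.mul_lt_mul_of_lt_of_lt hn1 hn1
    have h2 : (2:ℕ)^(L+1) * 2^(L+1) = 2^(2*L+2) := by ring
    have h3 : (2:ℕ)^(2*L+2) ≤ 2^(K-c) := by
      apply Nat.pow_le_pow_right (by norm_num)
      omega
    omega
  calc (n+1)*(n+1) * 2^(n-K) < 2^(K-c) * 2^(n-K) := by
        have hpos : 0 < 2^(n-K) := Nat.pow_pos (by norm_num)
        exact Nat.mul_lt_mul_of_lt_of_le hsq (le_refl _) hpos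
    _ = 2^(n-c) := by rw [hsplit]; ring

section Upper
variable (g K : ℕ) (dd wt : ℕ → Fin 2)

/-- cycle of length `g` (looped), exit from state 0 to a tail path of `K` states. -/
def cycM (hg : 1 ≤ g) (hK : 1 ≤ K) : NFAc (Fin 2) (g+K) where
  start := ⟨0, by omega⟩
  accept := fun s => (s:ℕ) = g + K - 1
  step := fun s a t =>
    ((s:ℕ) < g ∧ (t:ℕ) = ((s:ℕ)+1) % g ∧ a = dd (s:ℕ)) ∨
    ((s:ℕ) = 0 ∧ (t:ℕ) = g ∧ a = wt 0) ∨
    (g ≤ (s:ℕ) ∧ (s:ℕ)+1 < g+K ∧ (t:ℕ) = (s:ℕ)+1 ∧ a = wt ((s:ℕ)+1-g))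

variable (hg : 1 ≤ g) (hK : 1 ≤ K)

/-- tail runs have forced length -/
lemma TL : ∀ (y : List (Fin 2)) (l : List (Fin (g+K))) (s : Fin (g+K)), g ≤ (s:ℕ) →
    (cycM g K dd wt hg hK).RunFrom s y l → y.length = K - 1 - ((s:ℕ) - g) := by
  intro y
  induction y with
  | nil =>
    intro l s hs hrun
    obtain ⟨rfl, hacc⟩ := hrun
    have : (s:ℕ) = g + K - 1 := hacc
    simp; omega
  | cons a t ih =>
    intro l s hs hrun
    obtain ⟨q, l', hstep, hrun', rfl⟩ := hrun
    rcases hstep with ⟨h1, _, _⟩ | ⟨h1, _, _⟩ | ⟨h1, h2, h3, h4⟩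
    · omega
    · omega
    · have hq : g ≤ (q:ℕ) := by omega
      have := ih l' q hq hrun'
      simp only [List.length_cons]
      rw [this, h3]
      omega

/-- tail runs are deterministic -/
lemma TD : ∀ (y : List (Fin 2)) (l : List (Fin (g+K))) y2 l2 (s : Fin (g+K)), g ≤ (s:ℕ) →
    (cycM g K dd wt hg hK).RunFrom s y l → (cycM g K dd wt hg hK).RunFrom s y2 l2 →
    y = y2 ∧ l = l2 := by
  intro y
  induction y with
  | nil =>
    intro l y2 l2 s hs hrun hrun2
    obtain ⟨rfl, hacc⟩ := hrun
    have hsv : (s:ℕ) = g + K - 1 := hacc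
    cases y2 with
    | nil => obtain ⟨rfl, _⟩ := hrun2; exact ⟨rfl, rfl⟩
    | cons a2 t2 =>
      obtain ⟨q, l', hstep, _, rfl⟩ := hrun2
      rcases hstep with ⟨h1, _, _⟩ | ⟨h1, _, _⟩ | ⟨h1, h2, _, _⟩ <;> omega
  | cons a t ih =>
    intro l y2 l2 s hs hrun hrun2
    obtain ⟨q, l', hstep, hrun', rfl⟩ := hrun
    rcases hstep with ⟨h1, _, _⟩ | ⟨h1, _, _⟩ | ⟨h1, h2, h3, h4⟩
    · omega
    · omega
    cases y2 with
    | nil =>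
      obtain ⟨rfl, hacc⟩ := hrun2
      have : (s:ℕ) = g + K - 1 := hacc
      omega
    | cons a2 t2 =>
      obtain ⟨q2, l2', hstep2, hrun2', rfl⟩ := hrun2
      rcases hstep2 with ⟨h1', _, _⟩ | ⟨h1', _, _⟩ | ⟨h1', h2', h3', h4'⟩
      · omega
      · omega
      have hqq : q = q2 := by ext; omega
      rw [← hqq] at hrun2'
      obtain ⟨e1, e2⟩ := ih l' t2 l2' q (by omega) hrun' hrun2'
      refine ⟨?_, ?_⟩
      · rw [e1, h4, h4']
      · rw [e2]

/-- cycle runs have length lower bounds -/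
lemma CL : ∀ (y : List (Fin 2)) (l : List (Fin (g+K))) (s : Fin (g+K)), (s:ℕ) < g →
    (cycM g K dd wt hg hK).RunFrom s y l →
    ((s:ℕ) = 0 → K ≤ y.length) ∧ (0 < (s:ℕ) → K + (g - (s:ℕ)) ≤ y.length) := by
  intro y
  induction y with
  | nil =>
    intro l s hs hrun
    obtain ⟨rfl, hacc⟩ := hrun
    have : (s:ℕ) = g + K - 1 := hacc
    omega
  | cons a t ih =>
    intro l s hs hrun
    obtain ⟨q, l', hstep, hrun', rfl⟩ := hrun
    rcases hstep with ⟨h1, h2, h3⟩ | ⟨h1, h2, h3⟩ | ⟨h1, _, _, _⟩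
    · -- cycle step
      have hq : (q:ℕ) = ((s:ℕ)+1) % g := h2
      by_cases hcase : (s:ℕ) + 1 < g
      · have hqv : (q:ℕ) = (s:ℕ) + 1 := by rw [hq, Nat.mod_eq_of_lt hcase]
        have := (ih l' q (by omega) hrun').2 (by omega)
        simp only [List.length_cons]
        omega
      · have hsg : (s:ℕ) + 1 = g := by omega
        have hqv : (q:ℕ) = 0 := by rw [hq, hsg, Nat.mod_self]
        have := (ih l' q (by omega) hrun').1 hqv
        simp only [List.length_cons]
        omega
    · -- exit step
      have hq : (q:ℕ) = g := h2
      have := TL g K dd wt hg hK t l' q (by omega) hrun'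
      simp only [List.length_cons]
      omega
    · omega

/-- full determinism for equal lengths -/
lemma Udet : ∀ (y : List (Fin 2)) (l : List (Fin (g+K))) y2 l2 (s : Fin (g+K)),
    (cycM g K dd wt hg hK).RunFrom s y l → (cycM g K dd wt hg hK).RunFrom s y2 l2 →
    y.length = y2.length → y = y2 ∧ l = l2 := by
  intro y
  induction y with
  | nil =>
    intro l y2 l2 s hrun hrun2 hlen
    cases y2 with
    | nil =>
      obtain ⟨rfl, _⟩ := hrun
      obtain ⟨rfl, _⟩ := hrun2
      exact ⟨rfl, rfl⟩
    | cons _ _ => simp at hlen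
  | cons a t ih =>
    intro l y2 l2 s hrun hrun2 hlen
    cases y2 with
    | nil => simp at hlen
    | cons a2 t2 =>
      obtain ⟨q, l', hstep, hrun', rfl⟩ := hrun
      obtain ⟨q2, l2', hstep2, hrun2', rfl⟩ := hrun2
      have hlen' : t.length = t2.length := by simpa using hlen
      -- case analysis
      rcases hstep with ⟨h1, h2, h3⟩ | ⟨h1, h2, h3⟩ | ⟨h1, h2, h3, h4⟩ <;>
        rcases hstep2 with ⟨h1', h2', h3'⟩ | ⟨h1', h2', h3'⟩ | ⟨h1', h2', h3', h4'⟩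
      · -- cyc cyc
        have hqq : q = q2 := by ext; omega
        rw [← hqq] at hrun2'
        obtain ⟨e1, e2⟩ := ih l' t2 l2' q hrun' hrun2' hlen'
        exact ⟨by rw [e1, h3, h3'], by rw [e2]⟩
      · -- cyc exit : s = 0, lengths clash
        exfalso
        have hTL := TL g K dd wt hg hK t2 l2' q2 (by omega) hrun2'
        have hCL := CL g K dd wt hg hK t l' q
          (by rw [h2]; exact Nat.mod_lt _ (by omega)) hrun'
        by_cases hg1 : g = 1
        · have hq0 : (q:ℕ) = 0 := by rw [h2, h1', hg1]
          have := hCL.1 hq0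
          omega
        · have hq1 : (q:ℕ) = 1 := by rw [h2, h1']; rw [Nat.mod_eq_of_lt (by omega)]
          have := hCL.2 (by rw [hq1]; omega)
          rw [hq1] at this
          omega
      · omega
      · -- exit cyc
        exfalso
        have hTL := TL g K dd wt hg hK t l' q (by omega) hrun'
        have hCL := CL g K dd wt hg hK t2 l2' q2
          (by rw [h2']; exact Nat.mod_lt _ (by omega)) hrun2'
        by_cases hg1 : g = 1
        · have hq0 : (q2:ℕ) = 0 := by rw [h2', h1, hg1]
          have := hCL.1 hq0
          omega
        · have hq1 : (q2:ℕ) = 1 := by rw [h2', h1]; rw [Nat.mod_eq_of_lt (by omega)]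
          have := hCL.2 (by rw [hq1]; omega)
          rw [hq1] at this
          omega
      · -- exit exit
        have hqq : q = q2 := by ext; omega
        rw [← hqq] at hrun2'
        obtain ⟨e1, e2⟩ := ih l' t2 l2' q hrun' hrun2' hlen'
        exact ⟨by rw [e1, h3, h3'], by rw [e2]⟩
      · omega
      · omega
      · omega
      · -- tail tail
        have hqq : q = q2 := by ext; omega
        rw [← hqq] at hrun2'
        obtain ⟨e1, e2⟩ := ih l' t2 l2' q hrun' hrun2' hlen'
        exact ⟨by rw [e1, h4, h4'], by rw [e2]⟩

/-- the canonical word accepted by cycM : d^4 ++ tail -/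
theorem cycM_unique :
    (cycM g K dd wt hg hK).UniquelyAccepts
      (List.ofFn (fun j : Fin (4*g+K) =>
        if (j:ℕ) < 4*g then dd ((j:ℕ) % g) else wt ((j:ℕ) - 4*g))) := by
  constructor
  · -- existence of a run
    set n := 4*g + K with hn
    set ρ : ℕ → Fin (g+K) := fun j =>
      if h : j ≤ 4*g then ⟨j % g, by have := Nat.mod_lt j (show 0 < g by omega); omega⟩
      else ⟨g + min (j - 4*g) K - 1, by omega⟩ with hρ
    have hρ0 : ρ 0 = (cycM g K dd wt hg hK).start := by
      simp only [hρ, dif_pos (by omega : 0 ≤ 4*g)]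
      ext
      simp [cycM]
    refine ⟨List.ofFn (fun j : Fin (n+1) => ρ j), ?_⟩
    rw [← hρ0]
    refine runFrom_ofFn _ n ρ (fun j => if j < 4*g then dd (j % g) else wt (j - 4*g)) ?_ ?_
    · intro j hj
      by_cases hj4 : j < 4*g
      · -- cycle edge
        have e1 : ρ j = ⟨j % g, by have := Nat.mod_lt j (show 0 < g by omega); omega⟩ := by
          simp only [hρ, dif_pos (by omega : j ≤ 4*g)]
        by_cases hj41 : j + 1 ≤ 4*g
        · have e2 : ρ (j+1) = ⟨(j+1) % g, by
            have := Nat.mod_lt (j+1) (show 0 < g by omega); omega⟩ := by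
            simp only [hρ, dif_pos hj41]
          left
          refine ⟨?_, ?_, ?_⟩
          · rw [e1]; exact Nat.mod_lt j (by omega)
          · rw [e1, e2]
            show (j+1) % g = (j % g + 1) % g
            conv_lhs => rw [← Nat.mod_add_div j g]
            rw [Nat.add_right_comm, Nat.add_mul_mod_self_left]
          · show (if j < 4*g then dd (j % g) else wt (j - 4*g)) = dd ((ρ j : ℕ))
            rw [e1, if_pos hj4]
        · omega
      · by_cases hj4e : j = 4*g
        · -- exit edge
          right; left
          have e1 : ρ j = ⟨j % g, by have := Nat.mod_lt j (show 0 < g by omega); omega⟩ := by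
            simp only [hρ, dif_pos (by omega : j ≤ 4*g)]
          have e2 : ρ (j+1) = ⟨g + min (j + 1 - 4*g) K - 1, by omega⟩ := by
            simp only [hρ, dif_neg (by omega : ¬ j + 1 ≤ 4*g)]
          refine ⟨?_, ?_, ?_⟩
          · rw [e1]; show j % g = 0; rw [hj4e]; simp [Nat.mul_mod_right]
          · rw [e2]; show g + min (j + 1 - 4*g) K - 1 = g; rw [hj4e]
            have : 4*g + 1 - 4*g = 1 := by omega
            rw [this]
            have : min 1 K = 1 := by omega
            rw [this]
            omega
          · show (if j < 4*g then dd (j % g) else wt (j - 4*g)) = wt 0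
            rw [if_neg hj4]
            congr 1
            omega
        · -- tail edge
          right; right
          have h4j : 4*g < j := by omega
          have e1 : ρ j = ⟨g + min (j - 4*g) K - 1, by omega⟩ := by
            simp only [hρ, dif_neg (by omega : ¬ j ≤ 4*g)]
          have e2 : ρ (j+1) = ⟨g + min (j + 1 - 4*g) K - 1, by omega⟩ := by
            simp only [hρ, dif_neg (by omega : ¬ j + 1 ≤ 4*g)]
          have hm1 : min (j - 4*g) K = j - 4*g := by omega
          have hm2 : min (j + 1 - 4*g) K = j + 1 - 4*g := by omega
          refine ⟨?_, ?_, ?_, ?_⟩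
          · rw [e1]
            show g ≤ g + min (j - 4*g) K - 1
            rw [hm1]; omega
          · rw [e1]
            show g + min (j - 4*g) K - 1 + 1 < g + K
            rw [hm1]; omega
          · rw [e1, e2]
            show g + min (j + 1 - 4*g) K - 1 = g + min (j - 4*g) K - 1 + 1
            rw [hm1, hm2]; omega
          · show (if j < 4*g then dd (j % g) else wt (j - 4*g)) =
              wt ((ρ j : ℕ) + 1 - g)
            rw [e1, if_neg hj4]
            show wt (j - 4*g) = wt (g + min (j - 4*g) K - 1 + 1 - g)
            rw [hm1]
            congr 1
            omega
    · show ((cycM g K dd wt hg hK).accept) (ρ n)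
      have e1 : ρ n = ⟨g + min (n - 4*g) K - 1, by omega⟩ := by
        simp only [hρ, dif_neg (by omega : ¬ n ≤ 4*g)]
      rw [e1]
      show g + min (n - 4*g) K - 1 = g + K - 1
      have : n - 4*g = K := by omega
      rw [this]
      simp
  · intro y l y' l' hy hy' h1 h2
    exact Udet g K dd wt hg hK y l y' l' _ h1 h2 (by rw [hy, hy'])

end Upper

def pathM (n : ℕ) (ξ : ℕ → Fin 2) : NFAc (Fin 2) (n+1) where
  start := ⟨0, by omega⟩
  accept := fun s => (s:ℕ) = n
  step := fun s a t => (s:ℕ) < n ∧ (t:ℕ) = (s:ℕ)+1 ∧ a = ξ (s:ℕ)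

lemma pathM_det (n : ℕ) (ξ : ℕ → Fin 2) :
    ∀ (y : List (Fin 2)) l y2 l2 (s : Fin (n+1)),
    (pathM n ξ).RunFrom s y l → (pathM n ξ).RunFrom s y2 l2 → y = y2 ∧ l = l2 := by
  intro y
  induction y with
  | nil =>
    intro l y2 l2 s hrun hrun2
    obtain ⟨rfl, hacc⟩ := hrun
    have hs : (s:ℕ) = n := hacc
    cases y2 with
    | nil => obtain ⟨rfl, _⟩ := hrun2; exact ⟨rfl, rfl⟩
    | cons a2 t2 =>
      obtain ⟨q, l', hstep, _, rfl⟩ := hrun2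
      obtain ⟨h1, _, _⟩ := hstep
      omega
  | cons a t ih =>
    intro l y2 l2 s hrun hrun2
    obtain ⟨q, l', hstep, hrun', rfl⟩ := hrun
    obtain ⟨h1, h2, h3⟩ := hstep
    cases y2 with
    | nil =>
      obtain ⟨rfl, hacc⟩ := hrun2
      have hs : (s:ℕ) = n := hacc
      omega
    | cons a2 t2 =>
      obtain ⟨q2, l2', hstep2, hrun2', rfl⟩ := hrun2
      obtain ⟨h1', h2', h3'⟩ := hstep2
      have hqq : q = q2 := by ext; omega
      rw [← hqq] at hrun2'
      obtain ⟨e1, e2⟩ := ih l' t2 l2' q hrun' hrun2'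
      exact ⟨by rw [e1, h3, h3'], by rw [e2]⟩

theorem pathM_unique (n : ℕ) (ξ : ℕ → Fin 2) :
    (pathM n ξ).UniquelyAccepts (List.ofFn (fun j : Fin n => ξ j)) := by
  constructor
  · set w : ℕ → Fin (n+1) := fun j => ⟨min j n, by omega⟩ with hwdef
    have hw0 : w 0 = (pathM n ξ).start := by
      ext; simp [hwdef, pathM]
    refine ⟨List.ofFn (fun j : Fin (n+1) => w j), ?_⟩
    rw [← hw0]
    refine runFrom_ofFn _ n w ξ ?_ ?_
    · intro j hj
      refine ⟨?_, ?_, ?_⟩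
      · show min j n < n; omega
      · show min (j+1) n = min j n + 1; omega
      · show ξ j = ξ (min j n); congr 1; omega
    · show min n n = n; omega
  · intro y l y' l' hy hy' h1 h2
    exact pathM_det n ξ y l y' l' _ h1 h2


end SAC0Aux

open SAC0Aux in
/-- For every `c ≥ 1` and all sufficiently large `n`: for any positions
`0 ≤ p 0 < ⋯ < p (c-1) < n` and prescribed bits `v i`, there are words
`x, x' ∈ {0,1}ⁿ` both taking value `v i` at position `p i` for all `i`, with
`A_N(x) > n/3` and `A_N(x') ≤ n/3`.  (This is the combinatorial content of the
statement that `L_{2,3}` is `SAC⁰`-immune and `SAC⁰`-coimmune.) -/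
theorem SAC0_immune_coimmune_combinatorial (c : ℕ) (hc : 1 ≤ c) :
    ∃ N : ℕ, ∀ n : ℕ, N ≤ n →
      ∀ p : Fin c → ℕ, StrictMono p → (∀ i, p i < n) →
      ∀ v : Fin c → Fin 2,
      ∃ x x' : List (Fin 2), x.length = n ∧ x'.length = n ∧
        (∀ i : Fin c, x[p i]? = some (v i)) ∧
        (∀ i : Fin c, x'[p i]? = some (v i)) ∧
        (n : ℝ) / 3 < (AN x : ℝ) ∧ (AN x' : ℝ) ≤ (n : ℝ) / 3 := by
  classical
  obtain ⟨N1, hN1⟩ := final_N c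
  obtain ⟨cc, hcc⟩ : ∃ cc, cc = c * c := ⟨_, rfl⟩
  refine ⟨max N1 (500*(3*cc+1) + 9), fun n hn p hpmono hpn v => ?_⟩
  have hnN1 : N1 ≤ n := le_trans (le_max_left _ _) hn
  have hnU : 500*(3*cc+1) + 9 ≤ n := le_trans (le_max_right _ _) hn
  obtain ⟨hK1, h3K, hcount⟩ := hN1 n hnN1
  set K := c + 2*Nat.log 2 (n+1) + 3 with hK
  have hpinj : Function.Injective p := hpmono.injective
  -- ===== HARD WORD =====
  obtain ⟨f, hfbits, hfmix⟩ := exists_mixing n c K hK1 hcount p hpinj hpn v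
  set x : List (Fin 2) := List.ofFn f with hx
  have hxlen : x.length = n := by simp [hx]
  have hgetD : ∀ j, x.getD j 0 = extf f j := by
    intro j
    by_cases h : j < n
    · have h2 : j < x.length := by omega
      rw [List.getD_eq_getElem x 0 h2]
      have h3 : x[j]'h2 = f ⟨j, h⟩ := by
        simp only [hx]
        rw [List.getElem_ofFn]
      rw [h3]
      unfold extf
      rw [dif_pos h]
    · rw [List.getD_eq_default x 0 (by omega : x.length ≤ j)]
      unfold extf
      rw [dif_neg h]
  have hmix' : Mixing (fun j => x.getD j 0) x.length K := by
    have he : (fun j => x.getD j 0) = extf f := funext hgetD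
    rw [he, hxlen]
    exact hfmix
  have hxbits : ∀ i : Fin c, x[p i]? = some (v i) := by
    intro i
    rw [hx, List.getElem?_ofFn]
    rw [dif_pos (by simpa using hpn i)]
    exact congrArg some (hfbits i)
  -- AN x is realized
  have hword : List.ofFn (fun j : Fin n => extf f j) = x := by
    rw [hx]
    congr 1
    funext j
    unfold extf
    rw [dif_pos j.isLt]
  have hSne : {m | ∃ M : NFAc (Fin 2) m, M.UniquelyAccepts x}.Nonempty := by
    refine ⟨n+1, pathM n (extf f), ?_⟩
    rw [← hword]
    exact pathM_unique n (extf f)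
  have hmem : AN x ∈ {m | ∃ M : NFAc (Fin 2) m, M.UniquelyAccepts x} := Nat.sInf_mem hSne
  obtain ⟨M0, hM0⟩ := hmem
  have hlow := lower_main M0 x K hK1 hM0 hmix'
  rw [hxlen] at hlow
  have h3K' : 3 * (K * K) ≤ n := by rw [← mul_assoc]; exact h3K
  have hANx : n + 2 ≤ 3 * AN x := by omega
  have hxhard : (n : ℝ) / 3 < (AN x : ℝ) := by
    rw [div_lt_iff₀ (by norm_num : (0:ℝ) < 3)]
    have : (n:ℝ) + 2 ≤ 3 * (AN x : ℝ) := by exact_mod_cast hANx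
    linarith
  -- ===== EASY WORD =====
  set D : Fin c × Fin c → Finset ℕ := fun ij =>
    {p ij.2 - p ij.1, (p ij.2 - p ij.1)/2, (p ij.2 - p ij.1)/3} with hD
  set Bad : Finset ℕ := Finset.univ.biUnion D with hBad
  have hBadcard : Bad.card ≤ 3 * cc := by
    rw [hBad]
    calc (Finset.univ.biUnion D).card ≤ ∑ ij : Fin c × Fin c, (D ij).card :=
          Finset.card_biUnion_le
      _ ≤ ∑ _ij : Fin c × Fin c, 3 := by
          refine Finset.sum_le_sum (fun ij _ => ?_)
          rw [hD]
          refine le_trans (Finset.card_insert_le _ _) ?_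
          refine Nat.succ_le_succ (le_trans (Finset.card_insert_le _ _) ?_)
          simp
      _ = 3 * cc := by
          rw [Finset.sum_const, smul_eq_mul]
          simp only [Finset.card_univ, Fintype.card_prod, Fintype.card_fin]
          rw [hcc]; ring
  set lo := (2*n+8)/9 with hlo
  set hi := (n-1)/4 with hhi
  have hIcc : (Finset.Icc lo hi).card = hi + 1 - lo := Nat.card_Icc lo hi
  have hcards : Bad.card < (Finset.Icc lo hi).card := by
    rw [hIcc, hlo, hhi]
    have := hBadcard
    omega
  have hgex : ∃ g, g ∈ Finset.Icc lo hi \ Bad := by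
    have : 0 < (Finset.Icc lo hi \ Bad).card := by
      have := Finset.le_card_sdiff Bad (Finset.Icc lo hi)
      omega
    exact Finset.card_pos.1 this
  obtain ⟨g, hg⟩ := hgex
  rw [Finset.mem_sdiff, Finset.mem_Icc] at hg
  obtain ⟨⟨hglo, hghi⟩, hgBad⟩ := hg
  have hg1 : 1 ≤ g := by rw [hlo] at hglo; omega
  have h9g : 2*n ≤ 9*g := by rw [hlo] at hglo; omega
  have h4g : 4*g + 1 ≤ n := by rw [hhi] at hghi; omega
  set K' := n - 4*g with hK'
  have hK'1 : 1 ≤ K' := by omega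
  set dd : ℕ → Fin 2 := fun r =>
    if h : ∃ i, p i < 4*g ∧ p i % g = r then v h.choose else 0 with hdd
  set wt : ℕ → Fin 2 := fun r => if h : ∃ i, p i = 4*g + r then v h.choose else 0 with hwt
  set x' : List (Fin 2) := List.ofFn (fun j : Fin (4*g+K') =>
    if (j:ℕ) < 4*g then dd ((j:ℕ) % g) else wt ((j:ℕ) - 4*g)) with hx'
  have hx'len : x'.length = n := by rw [hx']; simp; omega
  have hx'uniq := cycM_unique g K' dd wt hg1 hK'1
  have hANx' : AN x' ≤ g + K' := by
    apply Nat.sInf_le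
    exact ⟨cycM g K' dd wt hg1 hK'1, hx'uniq⟩
  have hx'easy : (AN x' : ℝ) ≤ (n : ℝ) / 3 := by
    rw [le_div_iff₀ (by norm_num : (0:ℝ) < 3)]
    have h3 : 3 * (AN x') ≤ n := by omega
    have : (AN x' : ℝ) * 3 ≤ (n : ℝ) := by exact_mod_cast (by omega : AN x' * 3 ≤ n)
    linarith
  -- no residue collisions mod g among prescribed positions below 4g
  have hnocoll : ∀ i j : Fin c, p i < 4*g → p j < 4*g → p i % g = p j % g → i = j := by
    intro i j hi4 hj4 hmod
    by_contra hne
    have hpne : p i ≠ p j := fun h => hne (hpinj h)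
    -- wlog p i < p j
    have key : ∀ i' j' : Fin c, p i' < p j' → p i' < 4*g → p j' < 4*g →
        p i' % g = p j' % g → False := by
      intro i' j' hlt h1 h2 hm
      set Dv := p j' - p i' with hDv
      have hDpos : 0 < Dv := by omega
      have hDlt : Dv < 4*g := by omega
      have hdvd : g ∣ Dv := by
        have hmeq : Nat.ModEq g (p i') (p j') := hm
        rw [hDv]
        exact (Nat.modEq_iff_dvd' (by omega)).1 hmeq
      obtain ⟨q, hq⟩ := hdvd
      have hq4 : q < 4 := by
        by_contra hq4
        push_neg at hq4
        have : 4*g ≤ g*q := by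
          calc 4*g = g*4 := by ring
          _ ≤ g*q := Nat.mul_le_mul_left g hq4
        omega
      have hq1 : 1 ≤ q := by
        rcases Nat.eq_zero_or_pos q with h | h
        · rw [h, mul_zero] at hq; omega
        · exact h
      have hmem : g ∈ D (i', j') := by
        rw [hD]
        simp only [Finset.mem_insert, Finset.mem_singleton]
        interval_cases q
        · left; omega
        · right; left; omega
        · right; right; omega
      exact hgBad (by
        rw [hBad, Finset.mem_biUnion]
        exact ⟨(i', j'), Finset.mem_univ _, hmem⟩)
    rcases lt_trichotomy (p i) (p j) with h | h | h
    · exact key i j h hi4 hj4 hmod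
    · exact hpne h
    · exact key j i h hj4 hi4 hmod.symm
  have hx'bits : ∀ i : Fin c, x'[p i]? = some (v i) := by
    intro i
    have hpi := hpn i
    rw [hx', List.getElem?_ofFn]
    rw [dif_pos (show p i < 4*g + K' by omega)]
    refine congrArg some ?_
    show (if p i < 4*g then dd (p i % g) else wt (p i - 4*g)) = v i
    by_cases hlt : p i < 4*g
    · rw [if_pos hlt]
      show dd (p i % g) = v i
      rw [hdd]
      beta_reduce
      have hex : ∃ i', p i' < 4*g ∧ p i' % g = p i % g := ⟨i, hlt, rfl⟩
      rw [dif_pos hex]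
      have hspec := hex.choose_spec
      have : hex.choose = i := hnocoll _ _ hspec.1 hlt hspec.2
      rw [this]
    · rw [if_neg hlt]
      show wt (p i - 4*g) = v i
      rw [hwt]
      beta_reduce
      have hex : ∃ i', p i' = 4*g + (p i - 4*g) := ⟨i, by omega⟩
      rw [dif_pos hex]
      have hspec := hex.choose_spec
      have : hex.choose = i := hpinj (by omega)
      rw [this]
  exact ⟨x, x', hxlen, hx'len, hxbits, hx'bits, hxhard, hx'easy⟩
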